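/- arXiv:2010.11116 — 7 statements merged into one kernel-verified Lean document; each statement's English description precedes it below -/
import Mathlib

section
/- Given the multiset union of prefix composition multisets of h binary strings of equal length n, one can determine the real-valued coordinatewise sum of the h strings. Precisely: if s_1,...,s_h and t_1,...,t_h are binary strings of length n such that the multiset union of prefix composition multisets of the s_i equals that of the t_i, then the coordinatewise integer sums satisfy s_1+...+s_h = t_1+...+t_h. -/
open Finset

def wtB {m : ℕ} (s : Fin m → Bool) : ℕ := ∑ i, if s i then 1 else 0

def onesPref {n : ℕ} (s : Fin n → Bool) (i : ℕ) : ℕ :=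
  ∑ j ∈ Finset.univ.filter (fun j : Fin n => (j : ℕ) < i), if s j then 1 else 0

def onesSuff {n : ℕ} (s : Fin n → Bool) (i : ℕ) : ℕ :=
  ∑ j ∈ Finset.univ.filter (fun j : Fin n => n - i ≤ (j : ℕ)), if s j then 1 else 0

/-- Prefix composition multiset: compositions (number of 0s, number of 1s) of all
prefixes of lengths 1,...,n. -/
def Mp {n : ℕ} (s : Fin n → Bool) : Multiset (ℕ × ℕ) :=
  (Multiset.range n).map (fun i => (i + 1 - onesPref s (i + 1), onesPref s (i + 1)))

/-- Suffix composition multiset. -/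
def Msf {n : ℕ} (s : Fin n → Bool) : Multiset (ℕ × ℕ) :=
  (Multiset.range n).map (fun i => (i + 1 - onesSuff s (i + 1), onesSuff s (i + 1)))

/-- Prefix-suffix composition multiset M(s). -/
def Mps {n : ℕ} (s : Fin n → Bool) : Multiset (ℕ × ℕ) := Mp s + Msf s

lemma onesPref_le {n : ℕ} (s : Fin n → Bool) (i : ℕ) : onesPref s i ≤ i := by
  unfold onesPref
  calc ∑ j ∈ Finset.univ.filter (fun j : Fin n => (j : ℕ) < i), (if s j then 1 else 0)
      ≤ ∑ _j ∈ Finset.univ.filter (fun j : Fin n => (j : ℕ) < i), 1 := by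
        apply Finset.sum_le_sum; intro j _; split <;> simp
    _ = (Finset.univ.filter (fun j : Fin n => (j : ℕ) < i)).card := by simp
    _ ≤ i := by
        have : (Finset.univ.filter (fun j : Fin n => (j : ℕ) < i)).card
            ≤ (Finset.range i).card := by
          exact Finset.card_le_card_of_injOn (fun j => (j : ℕ))
            (by intro j hj; simp at hj ⊢; exact hj)
            (fun a _ b _ hab => Fin.val_injective hab)
        simpa using this

lemma onesPref_succ {n : ℕ} (s : Fin n → Bool) (i : Fin n) :
    onesPref s ((i : ℕ) + 1) = onesPref s i + (if s i then 1 else 0) := by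
  unfold onesPref
  have hset : Finset.univ.filter (fun j : Fin n => (j : ℕ) < (i : ℕ) + 1)
      = insert i (Finset.univ.filter (fun j : Fin n => (j : ℕ) < (i : ℕ))) := by
    ext j
    simp only [Finset.mem_filter, Finset.mem_univ, true_and, Finset.mem_insert,
      Nat.lt_succ_iff_lt_or_eq]
    constructor
    · rintro (h | h)
      · exact Or.inr h
      · exact Or.inl (Fin.val_injective h)
    · rintro (rfl | h)
      · exact Or.inr rfl
      · exact Or.inl h
  rw [hset, Finset.sum_insert (by simp)]
  ring

/-- the union of prefix composition multisets of h binary strings of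
length n determines their coordinatewise integer sum. -/
theorem stmt0 (n h : ℕ) (s t : Fin h → Fin n → Bool)
    (hM : (∑ j, Mp (s j)) = ∑ j, Mp (t j)) :
    (fun i : Fin n => ∑ j, if s j i then (1 : ℕ) else 0) =
      (fun i : Fin n => ∑ j, if t j i then (1 : ℕ) else 0) := by
  have key : ∀ ℓ : ℕ, ℓ ≤ n →
      (∑ j, onesPref (s j) ℓ) = ∑ j, onesPref (t j) ℓ := by
    intro ℓ hℓ
    rcases Nat.eq_zero_or_pos ℓ with h0 | hpos
    · subst h0; simp [onesPref]
    · obtain ⟨k, rfl⟩ : ∃ k, ℓ = k + 1 := ⟨ℓ - 1, (Nat.succ_pred_eq_of_pos hpos).symm⟩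
      have hk : k < n := hℓ
      set g : ℕ × ℕ → ℕ := fun p => if p.1 + p.2 = k + 1 then p.2 else 0 with hg
      let G : Multiset (ℕ × ℕ) →+ ℕ :=
        { toFun := fun M => (M.map g).sum
          map_zero' := by simp
          map_add' := by intro a b; simp }
      have hGM := congrArg G hM
      rw [map_sum, map_sum] at hGM
      have comp : ∀ u : Fin n → Bool, G (Mp u) = onesPref u (k + 1) := by
        intro u
        show ((Mp u).map g).sum = _
        unfold Mp
        rw [Multiset.map_map]
        have : ∀ x : ℕ,
            (g ∘ fun i => (i + 1 - onesPref u (i + 1), onesPref u (i + 1))) x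
            = if x = k then onesPref u (k + 1) else 0 := by
          intro x
          simp only [Function.comp, hg]
          rw [Nat.sub_add_cancel (onesPref_le u (x + 1))]
          by_cases hx : x = k
          · subst hx; simp
          · rw [if_neg (by omega), if_neg hx]
        rw [Multiset.map_congr rfl (fun x _ => this x)]
        have : ((Multiset.range n).map
            (fun x => if x = k then onesPref u (k + 1) else 0)).sum
            = ∑ x ∈ Finset.range n, (if x = k then onesPref u (k + 1) else 0) := rfl
        rw [this, Finset.sum_ite_eq' (Finset.range n) k]
        simp [hk]
      simp only [comp] at hGM
      exact hGM
  funext i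
  have h1 := key i (le_of_lt i.isLt)
  have h2 := key ((i : ℕ) + 1) i.isLt
  have e1 : ∀ u : Fin h → Fin n → Bool,
      (∑ j, onesPref (u j) ((i : ℕ) + 1))
      = (∑ j, onesPref (u j) (i : ℕ)) + ∑ j, (if u j i then 1 else 0) := by
    intro u
    rw [← Finset.sum_add_distrib]
    exact Finset.sum_congr rfl fun j _ => onesPref_succ (u j) i
  rw [e1 s, e1 t, h1] at h2
  exact Nat.add_left_cancel h2
end

section
/- If a binary string s of length N is a Dyck path, then every prefix of s of length i < N has strictly more 1s than 0s, while every suffix of s of length j < N has at least as many 0s as 1s. Consequently, given a composition from M(s) that is not the full-length composition, one can decide whether it arises from a prefix or from a suffix by comparing its number of 1s and 0s. -/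
open Finset

def IsDyck {N : ℕ} (s : Fin N → Bool) : Prop :=
  onesPref s N = N / 2 ∧ ∀ i : ℕ, 1 ≤ i → i ≤ N - 1 → i / 2 + 1 ≤ onesPref s i

lemma onesSuff_le {n : ℕ} (s : Fin n → Bool) (i : ℕ) : onesSuff s i ≤ i := by
  classical
  unfold onesSuff
  calc ∑ j ∈ Finset.univ.filter (fun j : Fin n => n - i ≤ (j : ℕ)), (if s j then 1 else 0)
      ≤ ∑ _j ∈ Finset.univ.filter (fun j : Fin n => n - i ≤ (j : ℕ)), 1 := by
        apply Finset.sum_le_sum; intro j _; split <;> simp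
    _ = (Finset.univ.filter (fun j : Fin n => n - i ≤ (j : ℕ))).card := by simp
    _ ≤ (Finset.range i).card := by
        refine Finset.card_le_card_of_injOn (fun j => (j : ℕ) - (n - i)) ?_ ?_
        · intro j hj
          simp only [Finset.mem_coe, Finset.mem_filter, Finset.mem_univ, true_and] at hj
          have := j.is_lt
          simp only [Finset.mem_coe, Finset.mem_range]
          omega
        · intro a ha b hb h
          simp only [Finset.mem_coe, Finset.mem_filter, Finset.mem_univ, true_and] at ha hb
          simp only at h
          exact Fin.ext (by omega)
    _ = i := Finset.card_range i

lemma split_sum {n : ℕ} (s : Fin n → Bool) (j : ℕ) :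
    onesPref s (n - j) + onesSuff s j = onesPref s n := by
  classical
  unfold onesPref onesSuff
  have h1 : Finset.univ.filter (fun j' : Fin n => (j' : ℕ) < n) = Finset.univ := by
    ext x; simp [x.is_lt]
  rw [h1]
  have := Finset.sum_filter_add_sum_filter_not Finset.univ
    (fun j' : Fin n => (j' : ℕ) < n - j) (fun j' => if s j' then 1 else 0)
  rw [← this]
  congr 1
  apply Finset.sum_congr _ (fun _ _ => rfl)
  ext x; simp [not_lt]

/-- for a Dyck path, every proper prefix has strictly more 1s than 0s,
every proper suffix has at least as many 0s as 1s, and hence any non-full-length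
composition in M(s) can be attributed to a prefix or a suffix by comparing counts. -/
theorem stmt5 (N : ℕ) (hN : Even N) (s : Fin N → Bool) (hs : IsDyck s) :
    (∀ i : ℕ, 1 ≤ i → i < N → i - onesPref s i < onesPref s i) ∧
    (∀ j : ℕ, 1 ≤ j → j < N → onesSuff s j ≤ j - onesSuff s j) ∧
    (∀ p : ℕ × ℕ, p ∈ Mps s → p.1 + p.2 < N →
      (p.1 < p.2 → p ∈ Mp s) ∧ (p.2 ≤ p.1 → p ∈ Msf s)) := by
  obtain ⟨k, hk⟩ := hN
  have htot : onesPref s N = N / 2 := hs.1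
  have part1 : ∀ i : ℕ, 1 ≤ i → i < N → i - onesPref s i < onesPref s i := by
    intro i hi1 hiN
    have h := hs.2 i hi1 (by omega)
    have hle := onesPref_le s i
    omega
  have part2 : ∀ j : ℕ, 1 ≤ j → j < N → onesSuff s j ≤ j - onesSuff s j := by
    intro j hj1 hjN
    have h := hs.2 (N - j) (by omega) (by omega)
    have hsp := split_sum s j
    have hle := onesSuff_le s j
    have hle2 := onesPref_le s (N - j)
    omega
  refine ⟨part1, part2, ?_⟩
  have hmp : ∀ q : ℕ × ℕ, q ∈ Mp s → q.1 + q.2 < N → q.1 < q.2 := by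
    intro q hq hqlt
    obtain ⟨i, hi, hqe⟩ := Multiset.mem_map.mp hq
    rw [Multiset.mem_range] at hi
    have ho := onesPref_le s (i + 1)
    subst hqe
    simp only at hqlt ⊢
    exact part1 (i + 1) (by omega) (by omega)
  have hmsf : ∀ q : ℕ × ℕ, q ∈ Msf s → q.1 + q.2 < N → q.2 ≤ q.1 := by
    intro q hq hqlt
    obtain ⟨i, hi, hqe⟩ := Multiset.mem_map.mp hq
    rw [Multiset.mem_range] at hi
    have ho := onesSuff_le s (i + 1)
    subst hqe
    simp only at hqlt ⊢
    exact part2 (i + 1) (by omega) (by omega)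
  intro p hp hlt
  rcases Multiset.mem_add.mp hp with h | h
  · exact ⟨fun _ => h, fun h2 => absurd (hmp p h hlt) (by omega)⟩
  · exact ⟨fun h2 => absurd (hmsf p h hlt) (by omega), fun _ => h⟩
end

section
/- Let s ∈ {0,1}^n with n a perfect square, written in blocks s = s_1 s_2 ... s_{√n} with each block of length √n. Define u = u_1...u_{√n} by u_1 = s_1 and, for j ≥ 2, u_j = s_j if R(u_1...u_{j-1}) and R(s_j) have strictly opposite signs conditions (u_j = s_j when R(u_1...u_{j-1}) < 0 and R(s_j) ≥ 0, or when R(u_1...u_{j-1}) ≥ 0 and R(s_j) < 0; otherwise u_j is the bitwise complement of s_j). Then for every j in [√n], |R(u_1...u_j)| ≤ √n. -/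
open Finset

/-- Running digital sum of a whole string: R(x) = 2·wt(x) − |x|. -/
def Rds {m : ℕ} (x : Fin m → Bool) : ℤ := 2 * (∑ i, if x i then (1 : ℤ) else 0) - m

lemma Rds_abs_le {m : ℕ} (x : Fin m → Bool) : |Rds x| ≤ (m : ℤ) := by
  unfold Rds
  have h1 : (0:ℤ) ≤ ∑ i, if x i then (1:ℤ) else 0 :=
    Finset.sum_nonneg (by intro i _; split <;> norm_num)
  have h2 : (∑ i, if x i then (1:ℤ) else 0) ≤ (m:ℤ) := by
    calc (∑ i, if x i then (1:ℤ) else 0) ≤ ∑ _i : Fin m, (1:ℤ) :=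
          Finset.sum_le_sum (by intro i _; split <;> norm_num)
      _ = m := by simp
  rw [abs_le]; constructor <;> linarith

lemma Rds_compl {m : ℕ} (x : Fin m → Bool) : Rds (fun t => ! x t) = - Rds x := by
  unfold Rds
  have : (∑ i, if ! x i then (1:ℤ) else 0) + (∑ i, if x i then (1:ℤ) else 0) = m := by
    rw [← Finset.sum_add_distrib]
    have : ∀ i : Fin m, ((if ! x i then (1:ℤ) else 0) + (if x i then 1 else 0)) = 1 := by
      intro i; cases x i <;> simp
    rw [Finset.sum_congr rfl (fun i _ => this i)]; simp
  linarith

/-- block balancing. With s split into √n blocks of length √n and u built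
blockwise by keeping or complementing each block according to the sign rule, the running
digital sum after any number of complete blocks is at most √n in absolute value. -/
theorem stmt6 (k : ℕ) (s u : Fin k → Fin k → Bool)
    (h0 : ∀ h : 0 < k, u ⟨0, h⟩ = s ⟨0, h⟩)
    (hrec : ∀ j : Fin k, 0 < (j : ℕ) →
      u j = if ((∑ i ∈ Finset.univ.filter (fun i : Fin k => (i : ℕ) < (j : ℕ)), Rds (u i)) < 0
          ↔ 0 ≤ Rds (s j))
        then s j else fun t => ! s j t) :
    ∀ j : ℕ, j ≤ k →
      |∑ i ∈ Finset.univ.filter (fun i : Fin k => (i : ℕ) < j), Rds (u i)| ≤ (k : ℤ) := by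
  intro j hj
  induction j with
  | zero => simp
  | succ j ih =>
    have hjk : j < k := hj
    have ihS : |∑ i ∈ Finset.univ.filter (fun i : Fin k => (i : ℕ) < j), Rds (u i)| ≤ (k : ℤ) :=
      ih hjk.le
    have hstep : Finset.univ.filter (fun i : Fin k => (i:ℕ) < j+1)
        = insert ⟨j, hjk⟩ (Finset.univ.filter (fun i : Fin k => (i:ℕ) < j)) := by
      ext i
      simp only [Finset.mem_filter, Finset.mem_insert, Finset.mem_univ, true_and, Fin.ext_iff]
      omega
    have hnotmem : (⟨j, hjk⟩ : Fin k) ∉ Finset.univ.filter (fun i : Fin k => (i:ℕ) < j) := by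
      simp
    rw [hstep, Finset.sum_insert hnotmem]
    set S := ∑ i ∈ Finset.univ.filter (fun i : Fin k => (i : ℕ) < j), Rds (u i) with hS
    have habs : |Rds (u ⟨j, hjk⟩)| ≤ (k : ℤ) := Rds_abs_le _
    rcases Nat.eq_zero_or_pos j with hj0 | hjpos
    · subst hj0
      have : S = 0 := by
        rw [hS]
        apply Finset.sum_eq_zero
        intro i hi
        simp at hi
      rw [this, add_zero]
      exact habs
    · have hu := hrec ⟨j, hjk⟩ hjpos
      rw [abs_le] at ihS habs ⊢
      rcases lt_or_ge S 0 with hSneg | hSpos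
      · have hr : 0 ≤ Rds (u ⟨j, hjk⟩) := by
          rw [hu]
          split
          · next h => exact (h.mp hSneg)
          · next h =>
            rw [Rds_compl]
            have : ¬ (0 ≤ Rds (s ⟨j, hjk⟩)) := fun hc => h ⟨fun _ => hc, fun _ => hSneg⟩
            linarith
        constructor <;> linarith
      · have hr : Rds (u ⟨j, hjk⟩) ≤ 0 := by
          rw [hu]
          split
          · next h =>
            have := h.mpr
            rcases lt_or_ge (Rds (s ⟨j, hjk⟩)) 0 with h1 | h1
            · linarith
            · exact absurd (h.mpr h1) (not_lt.mpr hSpos)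
          · next h =>
            rw [Rds_compl]
            rcases lt_or_ge (Rds (s ⟨j, hjk⟩)) 0 with h1 | h1
            · exact absurd (iff_of_false (not_lt.mpr hSpos) (not_le.mpr h1)) h
            · linarith
        constructor <;> linarith
end

section
/- With u ∈ {0,1}^n constructed by the block-balancing procedure (blocks of length √n, each block kept or complemented so the running digital sum of the concatenation of complete blocks alternates in sign appropriately), the running digital sum at every coordinate satisfies |R(u)_i| ≤ (3/2)√n for all i in [n]. -/
open Finset

/-- Running digital sum at position i: R(x)_i = 2·wt(x₁...x_i) − i. -/
def RDSat {m : ℕ} (x : Fin m → Bool) (i : ℕ) : ℤ :=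
  2 * (∑ j ∈ Finset.univ.filter (fun j : Fin m => (j : ℕ) < i), if x j then (1 : ℤ) else 0) - i

/-- The j-th block (of length k) of a string of length k·k. -/
def blk {k : ℕ} (u : Fin (k * k) → Bool) (j : Fin k) : Fin k → Bool :=
  fun t => u ⟨(j : ℕ) * k + (t : ℕ), by
    have h1 := j.isLt
    have h2 := t.isLt
    calc (j : ℕ) * k + (t : ℕ) < (j : ℕ) * k + k := by omega
      _ = ((j : ℕ) + 1) * k := by ring
      _ ≤ k * k := Nat.mul_le_mul_right k h1⟩

lemma rdsat_step {m : ℕ} (x : Fin m → Bool) (i : ℕ) (hi : i < m) :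
    RDSat x (i+1) = RDSat x i + (if x ⟨i, hi⟩ then 1 else -1) := by
  unfold RDSat
  have h : Finset.univ.filter (fun j : Fin m => (j:ℕ) < i+1)
      = insert ⟨i, hi⟩ (Finset.univ.filter (fun j : Fin m => (j:ℕ) < i)) := by
    ext j
    simp [Fin.ext_iff]
    omega
  rw [h, Finset.sum_insert (by simp)]
  push_cast
  split <;> ring

lemma rdsat_full {m : ℕ} (x : Fin m → Bool) : RDSat x m = Rds x := by
  unfold RDSat Rds
  rw [Finset.filter_true_of_mem (fun j _ => j.isLt)]

lemma rdsat_zero {m : ℕ} (x : Fin m → Bool) : RDSat x 0 = 0 := by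
  simp [RDSat]

lemma rdsat_lip {m : ℕ} (x : Fin m → Bool) (a b : ℕ) (hab : a ≤ b) (hb : b ≤ m) :
    |RDSat x b - RDSat x a| ≤ (b : ℤ) - a := by
  induction b, hab using Nat.le_induction with
  | base => simp
  | succ b hab ih =>
    have hbm : b < m := by omega
    have h1 := abs_le.mp (ih (by omega))
    rw [rdsat_step x b hbm, abs_le]
    push_cast
    constructor <;> (split <;> omega)

lemma rds_abs {k : ℕ} (v : Fin k → Bool) : |Rds v| ≤ (k : ℤ) := by
  unfold Rds
  have h0 : (0:ℤ) ≤ ∑ i, if v i then (1:ℤ) else 0 :=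
    Finset.sum_nonneg (by intro i _; split <;> norm_num)
  have h1 : (∑ i, if v i then (1:ℤ) else 0) ≤ (k:ℤ) := by
    calc (∑ i, if v i then (1:ℤ) else 0) ≤ ∑ _i : Fin k, (1:ℤ) :=
          Finset.sum_le_sum (by intro i _; split <;> norm_num)
      _ = k := by simp
  rw [abs_le]; constructor <;> linarith

lemma rds_neg {k : ℕ} (v : Fin k → Bool) : Rds (fun t => !v t) = -Rds v := by
  unfold Rds
  have h : ∀ i : Fin k, (if !v i then (1:ℤ) else 0) = 1 - (if v i then 1 else 0) := by
    intro i; cases hv : v i <;> simp [hv]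
  rw [Finset.sum_congr rfl (fun i _ => h i), Finset.sum_sub_distrib]
  simp; ring

lemma rdsat_shift {k : ℕ} (u : Fin (k * k) → Bool) (j : ℕ) (hj : j < k)
    (r : ℕ) (hr : r ≤ k) :
    RDSat u (j * k + r) = RDSat u (j * k) + RDSat (blk u ⟨j, hj⟩) r := by
  induction r with
  | zero => simp [rdsat_zero]
  | succ r ih =>
    have hrk : r < k := by omega
    have hjk : j * k + r < k * k := by
      calc j * k + r < j * k + k := by omega
        _ = (j + 1) * k := by ring
        _ ≤ k * k := Nat.mul_le_mul_right k hj
    rw [show j * k + (r+1) = (j * k + r) + 1 from rfl,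
        rdsat_step u _ hjk, rdsat_step (blk u ⟨j, hj⟩) r hrk, ih (by omega)]
    have he : u ⟨j * k + r, hjk⟩ = blk u ⟨j, hj⟩ ⟨r, hrk⟩ := rfl
    rw [he]; ring

/-- for u obtained from s by the block-balancing procedure, the running
digital sum at every coordinate i ∈ [n] satisfies |R(u)_i| ≤ (3/2)·√n. -/
theorem stmt7 (k : ℕ) (s u : Fin (k * k) → Bool)
    (h0 : ∀ h : 0 < k, blk u ⟨0, h⟩ = blk s ⟨0, h⟩)
    (hrec : ∀ j : Fin k, 0 < (j : ℕ) →
      blk u j = if (RDSat u ((j : ℕ) * k) < 0 ↔ 0 ≤ Rds (blk s j))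
        then blk s j else fun t => ! blk s j t) :
    ∀ i : ℕ, 1 ≤ i → i ≤ k * k → 2 * |RDSat u i| ≤ 3 * (k : ℤ) := by
  have boundary : ∀ j : ℕ, j ≤ k → |RDSat u (j * k)| ≤ (k : ℤ) := by
    intro j
    induction j with
    | zero =>
      intro _
      simp only [Nat.zero_mul, rdsat_zero, abs_zero]
      exact (Int.natCast_nonneg k)
    | succ j ih =>
      intro hj
      have hjk : j < k := hj
      have hB := ih (le_of_lt hjk)
      have hs2 := rdsat_shift u j hjk k le_rfl
      rw [rdsat_full] at hs2
      have habs : |Rds (blk u ⟨j, hjk⟩)| ≤ (k:ℤ) := rds_abs _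
      have e1 : (j+1)*k = j*k + k := by ring
      rw [e1, hs2]
      rcases Nat.eq_zero_or_pos j with hj0 | hj0
      · subst hj0
        have hz : RDSat u (0 * k) = 0 := by simp [rdsat_zero]
        rw [hz, zero_add]
        exact habs
      · have hu := hrec ⟨j, hjk⟩ hj0
        simp only [Fin.val_mk] at hu
        have hsign : (RDSat u (j*k) < 0 → 0 ≤ Rds (blk u ⟨j, hjk⟩)) ∧
            (0 ≤ RDSat u (j*k) → Rds (blk u ⟨j, hjk⟩) ≤ 0) := by
          by_cases hc : RDSat u (j * k) < 0 ↔ 0 ≤ Rds (blk s ⟨j, hjk⟩)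
          · rw [if_pos hc] at hu
            rw [hu]
            constructor
            · intro h; exact hc.mp h
            · intro h
              by_contra hcon
              push_neg at hcon
              exact absurd (hc.mpr (le_of_lt hcon)) (not_lt.mpr h)
          · rw [if_neg hc] at hu
            rw [hu, rds_neg]
            constructor
            · intro h
              have hc' : ¬ (0 ≤ Rds (blk s ⟨j, hjk⟩)) :=
                fun hq => hc ⟨fun _ => hq, fun _ => h⟩
              linarith [lt_of_not_ge hc']
            · intro h
              have hc' : 0 ≤ Rds (blk s ⟨j, hjk⟩) := by
                by_contra hq
                exact hc ⟨fun hb => absurd hb (not_lt.mpr h), fun hq2 => absurd hq2 hq⟩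
              linarith
        obtain ⟨p1, p2⟩ := hsign
        obtain ⟨g1, g2⟩ := abs_le.mp hB
        obtain ⟨g3, g4⟩ := abs_le.mp habs
        rw [abs_le]
        rcases lt_or_ge (RDSat u (j*k)) 0 with h | h
        · have := p1 h; constructor <;> omega
        · have := p2 h; constructor <;> omega
  intro i hi1 hi2
  have hk : 0 < k := by
    rcases Nat.eq_zero_or_pos k with h | h
    · subst h; omega
    · exact h
  obtain ⟨j, r, hjk, hr1, hrk, hir⟩ :
      ∃ j r : ℕ, j < k ∧ 1 ≤ r ∧ r ≤ k ∧ i = j * k + r := by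
    refine ⟨(i-1)/k, (i-1) % k + 1, ?_, ?_, ?_, ?_⟩
    · exact (Nat.div_lt_iff_lt_mul hk).mpr (by omega)
    · omega
    · exact Nat.mod_lt _ hk
    · rw [mul_comm]
      have hd := Nat.div_add_mod (i-1) k
      omega
  subst hir
  have hB := boundary j (le_of_lt hjk)
  have hB1 := boundary (j+1) hjk
  have hs1 := rdsat_shift u j hjk r hrk
  have hs2 := rdsat_shift u j hjk k le_rfl
  have hl1 : |RDSat (blk u ⟨j, hjk⟩) r - RDSat (blk u ⟨j, hjk⟩) 0| ≤ (r:ℤ) - 0 :=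
    rdsat_lip _ 0 r (Nat.zero_le r) hrk
  rw [rdsat_zero] at hl1
  have hl2 : |RDSat (blk u ⟨j, hjk⟩) k - RDSat (blk u ⟨j, hjk⟩) r| ≤ (k:ℤ) - r :=
    rdsat_lip _ r k hrk le_rfl
  have e1 : (j+1)*k = j*k + k := by ring
  rw [e1] at hB1
  obtain ⟨g1, g2⟩ := abs_le.mp hB
  obtain ⟨g3, g4⟩ := abs_le.mp hB1
  obtain ⟨g5, g6⟩ := abs_le.mp hl1
  obtain ⟨g7, g8⟩ := abs_le.mp hl2
  rcases abs_cases (RDSat u (j * k + r)) with ⟨ha, _⟩ | ⟨ha, _⟩ <;> rw [ha] <;> omega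
end

section
/- Let u ∈ {0,1}^n satisfy |R(u)_i| ≤ (3/2)√n for all i ∈ [n], let r ∈ {0,1}^{√n} be arbitrary, and let v = 1^{(5/2)√n+1} r u be the concatenation of (5/2)√n+1 ones, r, and u, of total length n + (7/2)√n + 1. Then for every i in the range of v, 0 < R(v)_i ≤ 5√n + 1. -/
open Finset

lemma RDSat_zero {M : ℕ} (x : Fin M → Bool) : RDSat x 0 = 0 := by
  simp [RDSat]

lemma RDSat_step {M : ℕ} (x : Fin M → Bool) (i : ℕ) (h : i < M) :
    RDSat x (i+1) = RDSat x i + (if x ⟨i,h⟩ then 1 else -1) := by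
  unfold RDSat
  have hset : Finset.univ.filter (fun j : Fin M => (j:ℕ) < i+1)
      = insert ⟨i,h⟩ (Finset.univ.filter (fun j : Fin M => (j:ℕ) < i)) := by
    ext j
    simp [Fin.ext_iff]
    omega
  rw [hset, Finset.sum_insert (by simp)]
  push_cast
  split <;> ring

lemma RDSat_lip {M : ℕ} (x : Fin M → Bool) (i j : ℕ) (h : i + j ≤ M) :
    RDSat x i - j ≤ RDSat x (i+j) ∧ RDSat x (i+j) ≤ RDSat x i + j := by
  induction j with
  | zero => simp
  | succ n ih =>
    have h' := ih (by omega)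
    have hn : i + n < M := by omega
    rw [show i + (n+1) = (i+n)+1 from rfl, RDSat_step x (i+n) hn]
    push_cast
    constructor <;> (split <;> linarith [h'.1, h'.2])

/-- if |R(u)_i| ≤ (3/2)√n for all i ∈ [n] and v = 1^{(5/2)√n+1} r u, then
0 < R(v)_i ≤ 5√n + 1 throughout v. Here k = √n (a positive even integer), n = k·k. -/
theorem stmt8 (k : ℕ) (hk : 0 < k) (hke : Even k)
    (u : Fin (k * k) → Bool)
    (hu : ∀ i : ℕ, 1 ≤ i → i ≤ k * k → 2 * |RDSat u i| ≤ 3 * (k : ℤ))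
    (r : Fin k → Bool)
    (v : Fin (5 * k / 2 + 1 + k + k * k) → Bool)
    (hv1 : ∀ i : Fin (5 * k / 2 + 1 + k + k * k), (i : ℕ) < 5 * k / 2 + 1 → v i = true)
    (hv2 : ∀ (i : Fin (5 * k / 2 + 1 + k + k * k)) (j : Fin k),
      (i : ℕ) = 5 * k / 2 + 1 + (j : ℕ) → v i = r j)
    (hv3 : ∀ (i : Fin (5 * k / 2 + 1 + k + k * k)) (j : Fin (k * k)),
      (i : ℕ) = 5 * k / 2 + 1 + k + (j : ℕ) → v i = u j) :
    ∀ i : ℕ, 1 ≤ i → i ≤ 5 * k / 2 + 1 + k + k * k →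
      0 < RDSat v i ∧ RDSat v i ≤ 5 * (k : ℤ) + 1 := by
  obtain ⟨t, ht⟩ := hke
  have hA : ∀ i, i ≤ 5 * k / 2 + 1 → RDSat v i = i := by
    intro i hi
    induction i with
    | zero => simpa using RDSat_zero v
    | succ n ih =>
      have hn : n < 5 * k / 2 + 1 + k + k * k := by omega
      rw [RDSat_step v n hn, ih (by omega),
        hv1 ⟨n, hn⟩ (by simpa using (by omega : n < 5 * k / 2 + 1))]
      simp only [if_true]
      push_cast
      ring
  intro i h1 h2
  rcases le_or_gt i (5 * k / 2 + 1) with hc | hc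
  · rw [hA i hc]
    constructor <;> omega
  rcases le_or_gt i (5 * k / 2 + 1 + k) with hc2 | hc2
  · have hl := RDSat_lip v (5*k/2+1) (i - (5*k/2+1)) (by omega)
    rw [show 5*k/2+1 + (i - (5*k/2+1)) = i by omega, hA (5*k/2+1) le_rfl] at hl
    obtain ⟨hl1, hl2⟩ := hl
    constructor <;> omega
  · have hl := RDSat_lip v (5*k/2+1) k (by omega)
    rw [hA (5*k/2+1) le_rfl] at hl
    obtain ⟨hl1, hl2⟩ := hl
    have hC : ∀ j, j ≤ k*k → RDSat v (5*k/2+1+k+j) = RDSat v (5*k/2+1+k) + RDSat u j := by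
      intro j hj
      induction j with
      | zero => simp [RDSat_zero]
      | succ n ih =>
        have hn : 5*k/2+1+k+n < 5*k/2+1+k+k*k := by omega
        have hun : n < k*k := by omega
        rw [show 5*k/2+1+k+(n+1) = (5*k/2+1+k+n)+1 from rfl, RDSat_step v _ hn,
            ih (by omega), RDSat_step u n hun, hv3 ⟨5*k/2+1+k+n, hn⟩ ⟨n, hun⟩ rfl]
        ring
    have hEq := hC (i - (5*k/2+1+k)) (by omega)
    rw [show 5*k/2+1+k+(i-(5*k/2+1+k)) = i by omega] at hEq
    have hub := hu (i - (5*k/2+1+k)) (by omega) (by omega)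
    have ha1 := le_abs_self (RDSat u (i - (5*k/2+1+k)))
    have ha2 := neg_le_abs (RDSat u (i - (5*k/2+1+k)))
    constructor <;> omega
end

section
/- The columns of a parity-check matrix of a binary linear code with minimum Hamming distance at least 2h+1 form a B_h sequence: if H is an m×n binary matrix such that every 2h columns of H are linearly independent over F_2 (equivalently the code with parity-check matrix H has minimum distance ≥ 2h+1), then the set of distinct columns of H, viewed as binary vectors, is a B_h set, i.e., no two distinct subsets of at most h columns have equal real-coordinatewise sums. -/
open Finset

/-- if every 2h columns of a binary matrix H are linearly independent over
F₂ (no nonzero vector of weight ≤ 2h in the kernel), then the set of distinct columns of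
H, viewed as binary vectors, is a B_h set: no two distinct subsets of at most h columns
have equal integer coordinatewise sums. -/
theorem stmt10 (m n h : ℕ) (H : Matrix (Fin m) (Fin n) (ZMod 2))
    (hker : ∀ x : Fin n → ZMod 2, x ≠ 0 →
      (Finset.univ.filter (fun j => x j ≠ 0)).card ≤ 2 * h → H.mulVec x ≠ 0) :
    ∀ A B : Finset (Fin m → ZMod 2),
      (∀ v ∈ A, ∃ j : Fin n, v = fun i => H i j) →
      (∀ v ∈ B, ∃ j : Fin n, v = fun i => H i j) →
      A.card ≤ h → B.card ≤ h → A ≠ B →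
      (fun i : Fin m => ∑ v ∈ A, (v i).val) ≠ (fun i : Fin m => ∑ v ∈ B, (v i).val) := by
  classical
  intro A B hA hB hAc hBc hAB heq
  set C : Finset (Fin m → ZMod 2) := (A \ B) ∪ (B \ A) with hC
  have hCne : C.Nonempty := by
    rw [Finset.nonempty_iff_ne_empty]
    intro hemp
    apply hAB
    rw [hC, Finset.union_eq_empty, Finset.sdiff_eq_empty_iff_subset,
      Finset.sdiff_eq_empty_iff_subset] at hemp
    exact Finset.Subset.antisymm hemp.1 hemp.2
  have hCcols : ∀ v ∈ C, ∃ j : Fin n, v = fun i => H i j := by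
    intro v hv
    rcases Finset.mem_union.1 hv with hv | hv
    · exact hA v (Finset.mem_sdiff.1 hv).1
    · exact hB v (Finset.mem_sdiff.1 hv).1
  choose f hf using hCcols
  set S : Finset (Fin n) := C.attach.image (fun v => f v.1 v.2) with hS
  have hfinj : ∀ (v : C) (w : C), f v.1 v.2 = f w.1 w.2 → v = w := by
    intro v w hvw
    have : v.1 = w.1 := by rw [hf v.1 v.2, hf w.1 w.2, hvw]
    exact Subtype.ext this
  set x : Fin n → ZMod 2 := fun j => if j ∈ S then 1 else 0 with hx
  have hxne : x ≠ 0 := by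
    obtain ⟨v, hv⟩ := hCne
    have hmem : f v hv ∈ S := Finset.mem_image.2 ⟨⟨v, hv⟩, Finset.mem_attach _ _, rfl⟩
    intro h0
    have := congrFun h0 (f v hv)
    simp [hx, hmem] at this
  have hcard : (Finset.univ.filter (fun j => x j ≠ 0)).card ≤ 2 * h := by
    have hsub : (Finset.univ.filter (fun j => x j ≠ 0)) ⊆ S := by
      intro j hj
      simp only [Finset.mem_filter, hx] at hj
      by_contra hjS
      simp [hjS] at hj
    calc (Finset.univ.filter (fun j => x j ≠ 0)).card ≤ S.card := Finset.card_le_card hsub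
      _ ≤ C.attach.card := Finset.card_image_le
      _ = C.card := Finset.card_attach
      _ ≤ (A \ B).card + (B \ A).card := Finset.card_union_le _ _
      _ ≤ A.card + B.card := by
          exact Nat.add_le_add (Finset.card_le_card Finset.sdiff_subset)
            (Finset.card_le_card Finset.sdiff_subset)
      _ ≤ 2 * h := by omega
  apply hker x hxne hcard
  funext i
  have hmv : H.mulVec x i = ∑ v ∈ C, v i := by
    have h1 : H.mulVec x i = ∑ j ∈ S, H i j := by
      simp only [Matrix.mulVec, dotProduct, hx, mul_ite, mul_one, mul_zero]
      rw [Finset.sum_ite_mem, Finset.univ_inter]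
    rw [h1, hS, Finset.sum_image (fun v _ w _ hvw => hfinj v w hvw)]
    rw [← Finset.sum_attach C (fun v => v i)]
    refine Finset.sum_congr rfl fun v _ => ?_
    exact (congrFun (hf v.1 v.2) i).symm
  rw [hmv]
  have heqi : ∑ v ∈ A, v i = ∑ v ∈ B, v i := by
    have h0 := congrFun heq i
    have hcast : ((∑ v ∈ A, (v i).val : ℕ) : ZMod 2) = ((∑ v ∈ B, (v i).val : ℕ) : ZMod 2) := by
      rw [h0]
    push_cast at hcast
    simpa [ZMod.natCast_val, ZMod.cast_id] using hcast
  have hAsplit : ∑ v ∈ A \ B, v i + ∑ v ∈ A ∩ B, v i = ∑ v ∈ A, v i := by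
    rw [← Finset.sdiff_inter_self_left A B]
    exact Finset.sum_sdiff (Finset.inter_subset_left)
  have hBsplit : ∑ v ∈ B \ A, v i + ∑ v ∈ A ∩ B, v i = ∑ v ∈ B, v i := by
    rw [← Finset.sdiff_inter_self_left B A, Finset.inter_comm A B]
    exact Finset.sum_sdiff (Finset.inter_subset_left)
  have hdisj : Disjoint (A \ B) (B \ A) := disjoint_sdiff_sdiff
  rw [hC, Finset.sum_union hdisj, Pi.zero_apply]
  have two_eq : (2 : ZMod 2) = 0 := rfl
  linear_combination hAsplit + hBsplit - heqi +
    (∑ v ∈ B, v i - ∑ v ∈ A ∩ B, v i) * two_eq +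
    (∑ v ∈ A, v i - ∑ v ∈ B, v i) * two_eq
end

section
/- Let C ⊆ {0,1}^n be a 2-prefix code in which every codeword can be written as ab with a of length m and b of length n−m. For a ∈ {0,1}^m let B_a = {b : ab ∈ C}. If a ≠ a' both occur as first parts of codewords and wt(a) = wt(a'), then |B_a ∩ B_{a'}| ≤ 1. -/
open Finset

/-- C is a 2-prefix code. -/
def twoPrefix {n : ℕ} (C : Finset (Fin n → Bool)) : Prop :=
  ∀ S T : Finset (Fin n → Bool), S ⊆ C → T ⊆ C → S.card ≤ 2 → T.card ≤ 2 → S ≠ T →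
    (∑ x ∈ S, Mp x) ≠ ∑ x ∈ T, Mp x

/-- B_a = { b : ab ∈ C }. -/
def BaC {m k : ℕ} (C : Finset (Fin (m + k) → Bool)) (a : Fin m → Bool) :
    Finset (Fin k → Bool) :=
  Finset.univ.filter (fun b => Fin.append a b ∈ C)


lemma onesPref_append_le {m k : ℕ} (a : Fin m → Bool) (b : Fin k → Bool) {i : ℕ}
    (hi : i ≤ m) : onesPref (Fin.append a b) i = onesPref a i := by
  unfold onesPref
  rw [Finset.sum_filter, Finset.sum_filter, Fin.sum_univ_add]
  simp only [Fin.coe_castAdd, Fin.coe_natAdd, Fin.append_left, Fin.append_right]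
  have h2 : ∀ j : Fin k, ¬ (m + (j : ℕ) < i) := fun j => by omega
  simp [h2]

lemma onesPref_append_ge {m k : ℕ} (a : Fin m → Bool) (b : Fin k → Bool) (t : ℕ) :
    onesPref (Fin.append a b) (m + t) = wtB a + onesPref b t := by
  unfold onesPref wtB
  rw [Finset.sum_filter, Finset.sum_filter, Fin.sum_univ_add]
  simp only [Fin.coe_castAdd, Fin.coe_natAdd, Fin.append_left, Fin.append_right]
  have h1 : ∀ j : Fin m, ((j : ℕ) < m + t) := fun j => by omega
  have h2 : ∀ j : Fin k, (m + (j : ℕ) < m + t) ↔ ((j : ℕ) < t) := fun j => by omega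
  simp [h1, h2]

def Waux (m k : ℕ) (w : ℕ) (b : Fin k → Bool) : Multiset (ℕ × ℕ) :=
  (Multiset.range k).map (fun i => (m + (i + 1) - (w + onesPref b (i + 1)), w + onesPref b (i + 1)))

lemma Mp_append {m k : ℕ} (a : Fin m → Bool) (b : Fin k → Bool) :
    Mp (Fin.append a b) = Mp a + Waux m k (wtB a) b := by
  unfold Mp Waux
  rw [Multiset.range_add, Multiset.map_add, Multiset.map_map]
  congr 1
  · refine Multiset.map_congr rfl (fun i hi => ?_)
    rw [Multiset.mem_range] at hi
    rw [onesPref_append_le a b (by omega)]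
  · refine Multiset.map_congr rfl (fun i hi => ?_)
    simp only [Function.comp_apply]
    have : m + i + 1 = m + (i + 1) := by omega
    rw [this, onesPref_append_ge a b (i + 1)]

lemma append_inj {m k : ℕ} {a a' : Fin m → Bool} {b b' : Fin k → Bool}
    (h : Fin.append a b = Fin.append a' b') : a = a' ∧ b = b' := by
  constructor
  · funext j
    have := congrFun h (Fin.castAdd k j)
    simpa using this
  · funext j
    have := congrFun h (Fin.natAdd m j)
    simpa using this


theorem stmt13 (m k : ℕ) (C : Finset (Fin (m + k) → Bool)) (hC : twoPrefix C)
    (a a' : Fin m → Bool) (ha : a ≠ a') (hw : wtB a = wtB a')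
    (hex : ∃ b, Fin.append a b ∈ C) (hex' : ∃ b, Fin.append a' b ∈ C) :
    (BaC C a ∩ BaC C a').card ≤ 1 := by
  by_contra h
  push_neg at h
  rw [Finset.one_lt_card] at h
  obtain ⟨b1, hb1, b2, hb2, hbne⟩ := h
  simp only [BaC, Finset.mem_inter, Finset.mem_filter, Finset.mem_univ, true_and] at hb1 hb2
  obtain ⟨hab1, ha'b1⟩ := hb1
  obtain ⟨hab2, ha'b2⟩ := hb2
  have hne1 : Fin.append a b1 ≠ Fin.append a' b2 := fun h => ha (append_inj h).1
  have hne2 : Fin.append a b2 ≠ Fin.append a' b1 := fun h => ha (append_inj h).1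
  have hST : ({Fin.append a b1, Fin.append a' b2} : Finset (Fin (m+k) → Bool)) ≠
      {Fin.append a b2, Fin.append a' b1} := by
    intro hEq
    have hmem : Fin.append a b1 ∈ ({Fin.append a b2, Fin.append a' b1} : Finset (Fin (m+k) → Bool)) := by
      rw [← hEq]; simp
    rw [Finset.mem_insert, Finset.mem_singleton] at hmem
    rcases hmem with h | h
    · exact hbne (append_inj h).2
    · exact ha (append_inj h).1
  apply hC {Fin.append a b1, Fin.append a' b2} {Fin.append a b2, Fin.append a' b1}
    ?_ ?_ ?_ ?_ hST
  · rw [Finset.sum_pair hne1, Finset.sum_pair hne2]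
    rw [Mp_append, Mp_append, Mp_append, Mp_append, hw]
    abel
  · intro x hx
    rw [Finset.mem_insert, Finset.mem_singleton] at hx
    rcases hx with h | h <;> subst h <;> assumption
  · intro x hx
    rw [Finset.mem_insert, Finset.mem_singleton] at hx
    rcases hx with h | h <;> subst h <;> assumption
  · exact Finset.card_insert_le _ _ |>.trans (by simp)
  · exact Finset.card_insert_le _ _ |>.trans (by simp)
end
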